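/- arXiv:1802.02708 — 5 statements merged into one kernel-verified Lean document; each statement's English description precedes it below -/
import Mathlib

section
/- Continuity of roots: Let f(x) = Σ_{l=0}^n a_l x^l ∈ ℂ[x] be monic of degree n with distinct roots α₁,…,α_k of multiplicities m₁,…,m_k. For any ε with 0 < ε < min_{i<j} |αᵢ − αⱼ|/2, there exists δ > 0 such that every monic polynomial g(x) = Σ_{l=0}^n b_l x^l of degree n with |b_l − a_l| < δ for all l = 0,…,n−1 has exactly m_j roots (counted with multiplicity) in the open disk D(α_j; ε) = {z ∈ ℂ : |z − α_j| < ε}, for each j = 1,…,k. -/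
open Polynomial

open Filter Topology

open scoped Classical in
private lemma myRel_and_right {α β : Type*} {R : α → β → Prop} {p : β → Prop} :
    ∀ {s : Multiset α} {t : Multiset β}, Multiset.Rel R s t → (∀ b ∈ t, p b) →
      Multiset.Rel (fun a b => R a b ∧ p b) s t := by
  intro s t h
  induction h with
  | zero => intro _; exact Multiset.Rel.zero
  | @cons a b s' t' hab _ ih =>
    intro hp
    exact Multiset.Rel.cons ⟨hab, hp _ (Multiset.mem_cons_self _ _)⟩
      (ih fun b hb => hp b (Multiset.mem_cons_of_mem hb))

open scoped Classical in
private lemma myRel_filter_card {α β : Type*} {R : α → β → Prop} {P : α → Prop} {Q : β → Prop}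
    (h : ∀ a b, R a b → (P a ↔ Q b)) :
    ∀ {s : Multiset α} {t : Multiset β}, Multiset.Rel R s t →
      (s.filter P).card = (t.filter Q).card := by
  intro s t hrel
  induction hrel with
  | zero => simp
  | @cons a b s' t' hab _ ih =>
    by_cases hP : P a
    · have hQ := (h _ _ hab).mp hP
      simp [Multiset.filter_cons_of_pos, hP, hQ, ih]
    · have hQ : ¬ Q b := fun h' => hP ((h _ _ hab).mpr h')
      simp [Multiset.filter_cons_of_neg, hP, hQ, ih]

open scoped Classical in
private lemma myRoots_tendsto {ι : Type*} (U : Ultrafilter ι) :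
    ∀ (n : ℕ) (p : Polynomial ℂ), p.Monic → p.natDegree = n →
    ∀ (g : ι → Polynomial ℂ), (∀ᶠ i in (U : Filter ι), (g i).Monic ∧ (g i).natDegree = n) →
    (∀ l, Tendsto (fun i => (g i).coeff l) U (𝓝 (p.coeff l))) →
    ∀ r : ℝ, 0 < r → ∀ᶠ i in (U : Filter ι),
      Multiset.Rel (fun a b => dist a b < r) (g i).roots p.roots := by
  intro n
  induction n with
  | zero =>
    intro p hp hpdeg g hg _ r hr
    have hp1 : p = 1 := hp.natDegree_eq_zero.mp hpdeg
    filter_upwards [hg] with i hi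
    have hg1 : g i = 1 := hi.1.natDegree_eq_zero.mp hi.2
    rw [hp1, hg1, roots_one]
    exact Multiset.Rel.zero
  | succ n ih =>
    intro p hp hpdeg g hg hcoeff r hr
    -- choose a root of each g i
    set z : ι → ℂ := fun i => if h : ∃ x, (g i).IsRoot x then h.choose else 0 with hz_def
    have hzroot : ∀ᶠ i in (U : Filter ι), (g i).IsRoot (z i) := by
      filter_upwards [hg] with i hi
      have hdeg : 0 < (g i).degree := by
        rw [degree_eq_natDegree hi.1.ne_zero, hi.2]
        exact_mod_cast Nat.succ_pos n
      have hex : ∃ x, (g i).IsRoot x := Complex.exists_root hdeg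
      simp only [hz_def, dif_pos hex]
      exact hex.choose_spec
    -- uniform bound on the chosen roots
    set B : NNReal := ((Finset.range (n + 1)).sup fun l => ‖p.coeff l‖₊) + 2 with hB_def
    have hbound : ∀ᶠ i in (U : Filter ι), z i ∈ Metric.closedBall (0 : ℂ) (B : ℝ) := by
      have hcl : ∀ᶠ i in (U : Filter ι),
          ∀ l ∈ Finset.range (n + 1), ‖(g i).coeff l‖₊ ≤ ‖p.coeff l‖₊ + 1 := by
        rw [eventually_all_finset]
        intro l _
        have := (hcoeff l).eventually (Metric.closedBall_mem_nhds (p.coeff l) one_pos)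
        filter_upwards [this] with i hi
        have h2 : ‖(g i).coeff l‖ ≤ ‖p.coeff l‖ + 1 := by
          have h3 := norm_sub_norm_le ((g i).coeff l) (p.coeff l)
          rw [← dist_eq_norm] at h3
          linarith
        exact_mod_cast h2
      filter_upwards [hg, hzroot, hcl] with i hi hrt hcli
      have hlt : ‖z i‖₊ < cauchyBound (g i) := hrt.norm_lt_cauchyBound hi.1.ne_zero
      have hcb : cauchyBound (g i) ≤ B := by
        rw [cauchyBound, hi.1.leadingCoeff, nnnorm_one, div_one, hB_def, hi.2]
        have : ((Finset.range (n + 1)).sup fun l => ‖(g i).coeff l‖₊)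
            ≤ ((Finset.range (n + 1)).sup fun l => ‖p.coeff l‖₊) + 1 :=
          Finset.sup_le fun l hl => (hcli l hl).trans
            (add_le_add_left (Finset.le_sup (f := fun l => ‖p.coeff l‖₊) hl) 1)
        calc ((Finset.range (n + 1)).sup fun l => ‖(g i).coeff l‖₊) + 1
            ≤ (((Finset.range (n + 1)).sup fun l => ‖p.coeff l‖₊) + 1) + 1 :=
              add_le_add_left this 1
          _ = _ := by rw [add_assoc]; norm_num
      simp only [Metric.mem_closedBall, dist_zero_right]
      exact_mod_cast (hlt.le.trans hcb)
    -- limit point of the roots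
    obtain ⟨w, hwB, hwle⟩ := (isCompact_closedBall (0 : ℂ) (B : ℝ)).ultrafilter_le_nhds
      (U.map z) (le_principal_iff.mpr (Ultrafilter.mem_map.mpr hbound))
    have hz_tendsto : Tendsto z (U : Filter ι) (𝓝 w) := hwle
    -- w is a root of p
    have hpw : p.IsRoot w := by
      have heval : Tendsto (fun i => (g i).eval (z i)) (U : Filter ι) (𝓝 (p.eval w)) := by
        have h1 : Tendsto (fun i => ∑ l ∈ Finset.range (n + 1 + 1),
            (g i).coeff l * z i ^ l) (U : Filter ι)
            (𝓝 (∑ l ∈ Finset.range (n + 1 + 1), p.coeff l * w ^ l)) :=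
          tendsto_finset_sum _ fun l _ => (hcoeff l).mul (hz_tendsto.pow l)
        have h2 : p.eval w = ∑ l ∈ Finset.range (n + 1 + 1), p.coeff l * w ^ l := by
          rw [eval_eq_sum_range, hpdeg]
        rw [h2]
        refine h1.congr' ?_
        filter_upwards [hg] with i hi
        rw [eval_eq_sum_range, hi.2]
      have h0 : Tendsto (fun i => (g i).eval (z i)) (U : Filter ι) (𝓝 0) := by
        refine tendsto_const_nhds.congr' ?_
        filter_upwards [hzroot] with i hi
        exact hi.symm
      exact (tendsto_nhds_unique h0 heval).symm
    -- divide out the roots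
    set q : Polynomial ℂ := p /ₘ (X - C w) with hq_def
    have hpfact : (X - C w) * q = p := mul_divByMonic_eq_iff_isRoot.mpr hpw
    have hq_monic : q.Monic := (monic_X_sub_C w).of_mul_monic_left (hpfact.symm ▸ hp)
    have hq_deg : q.natDegree = n := by
      rw [hq_def, natDegree_divByMonic p (monic_X_sub_C w), hpdeg, natDegree_X_sub_C]
      omega
    set qg : ι → Polynomial ℂ := fun i => (g i) /ₘ (X - C (z i)) with hqg_def
    have hqg_fact : ∀ᶠ i in (U : Filter ι), (X - C (z i)) * qg i = g i := by
      filter_upwards [hzroot] with i hi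
      exact mul_divByMonic_eq_iff_isRoot.mpr hi
    have hqg_ev : ∀ᶠ i in (U : Filter ι), (qg i).Monic ∧ (qg i).natDegree = n := by
      filter_upwards [hg, hqg_fact] with i hi hfac
      refine ⟨(monic_X_sub_C (z i)).of_mul_monic_left (hfac.symm ▸ hi.1), ?_⟩
      rw [hqg_def, natDegree_divByMonic _ (monic_X_sub_C (z i)), hi.2, natDegree_X_sub_C]
      omega
    have hqg_coeff : ∀ l, Tendsto (fun i => (qg i).coeff l) (U : Filter ι) (𝓝 (q.coeff l)) := by
      intro l
      have h1 : Tendsto (fun i => ∑ t ∈ Finset.Icc (l + 1) (n + 1),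
          z i ^ (t - (l + 1)) * (g i).coeff t) (U : Filter ι)
          (𝓝 (∑ t ∈ Finset.Icc (l + 1) (n + 1), w ^ (t - (l + 1)) * p.coeff t)) :=
        tendsto_finset_sum _ fun t _ => (hz_tendsto.pow _).mul (hcoeff t)
      have h2 : q.coeff l = ∑ t ∈ Finset.Icc (l + 1) (n + 1), w ^ (t - (l + 1)) * p.coeff t := by
        rw [hq_def, coeff_divByMonic_X_sub_C, hpdeg]
      rw [h2]
      refine h1.congr' ?_
      filter_upwards [hg] with i hi
      rw [hqg_def, coeff_divByMonic_X_sub_C, hi.2]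
    have hrel := ih q hq_monic hq_deg qg hqg_ev hqg_coeff r hr
    have hzw : ∀ᶠ i in (U : Filter ι), dist (z i) w < r :=
      hz_tendsto.eventually (Metric.ball_mem_nhds w hr) |>.mono fun i hi => by
        simpa [Metric.mem_ball] using hi
    have hproots : p.roots = w ::ₘ q.roots := by
      rw [← hpfact, roots_mul (hpfact.symm ▸ hp.ne_zero : (X - C w) * q ≠ 0), roots_X_sub_C,
      ← Multiset.singleton_add]
    filter_upwards [hg, hrel, hzw, hqg_fact] with i hi hri hzi hfi
    have hgroots : (g i).roots = z i ::ₘ (qg i).roots := by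
      rw [← hfi, roots_mul (hfi.symm ▸ hi.1.ne_zero : (X - C (z i)) * qg i ≠ 0), roots_X_sub_C,
      ← Multiset.singleton_add]
    rw [hproots, hgroots]
    exact Multiset.Rel.cons hzi hri

open scoped Classical in
/-- Continuity of roots: a monic complex polynomial close enough to `f` (coefficientwise)
has exactly `m j` roots, counted with multiplicity, in the `ε`-disk around the `j`-th
distinct root `α j` of `f`. -/
theorem stmt10 (n k : ℕ) (f : Polynomial ℂ) (hf : f.Monic) (hdeg : f.natDegree = n)
    (α : Fin k → ℂ) (hα : Function.Injective α) (m : Fin k → ℕ) (hm : ∀ j, 0 < m j)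
    (hfact : f = ∏ j, (X - C (α j)) ^ (m j))
    (ε : ℝ) (hε : 0 < ε)
    (hεsmall : ∀ i j : Fin k, i ≠ j → ε < dist (α i) (α j) / 2) :
    ∃ δ > (0 : ℝ), ∀ g : Polynomial ℂ, g.Monic → g.natDegree = n →
      (∀ l < n, dist (g.coeff l) (f.coeff l) < δ) →
      ∀ j : Fin k,
        (g.roots.filter fun z => dist z (α j) < ε).card = m j := by
  by_contra hcon
  push_neg at hcon
  have hsel : ∀ i : ℕ, ∃ g : Polynomial ℂ, g.Monic ∧ g.natDegree = n ∧
      (∀ l < n, dist (g.coeff l) (f.coeff l) < 1 / (i + 1)) ∧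
      ∃ j, (g.roots.filter fun z => dist z (α j) < ε).card ≠ m j := by
    intro i
    obtain ⟨g, h1, h2, h3, j, h4⟩ := hcon (1 / (i + 1)) (by positivity)
    exact ⟨g, h1, h2, h3, j, h4⟩
  choose g hg1 hg2 hg3 hg4 using hsel
  set U : Ultrafilter ℕ := Ultrafilter.of atTop with hU_def
  have hUle : (U : Filter ℕ) ≤ atTop := Ultrafilter.of_le _
  have hcoeff : ∀ l, Tendsto (fun i => (g i).coeff l) (U : Filter ℕ) (𝓝 (f.coeff l)) := by
    intro l
    rcases lt_trichotomy l n with hl | hl | hl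
    · have hd : Tendsto (fun i : ℕ => dist ((g i).coeff l) (f.coeff l)) atTop (𝓝 0) := by
        refine squeeze_zero (fun i => dist_nonneg) (fun i => (hg3 i l hl).le) ?_
        exact tendsto_one_div_add_atTop_nhds_zero_nat
      exact (tendsto_iff_dist_tendsto_zero.mpr hd).mono_left hUle
    · have h1 : ∀ i, (g i).coeff l = 1 := fun i => by
        rw [hl, ← hg2 i]; exact (hg1 i).coeff_natDegree
      have h2 : f.coeff l = 1 := by rw [hl, ← hdeg]; exact hf.coeff_natDegree
      simp only [h1, h2]
      exact tendsto_const_nhds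
    · have h1 : ∀ i, (g i).coeff l = 0 := fun i =>
        coeff_eq_zero_of_natDegree_lt (by rw [hg2 i]; exact hl)
      have h2 : f.coeff l = 0 := coeff_eq_zero_of_natDegree_lt (by rw [hdeg]; exact hl)
      simp only [h1, h2]
      exact tendsto_const_nhds
  have hgev : ∀ᶠ i in (U : Filter ℕ), (g i).Monic ∧ (g i).natDegree = n :=
    Eventually.of_forall fun i => ⟨hg1 i, hg2 i⟩
  have hrel := myRoots_tendsto U n f hf hdeg g hgev hcoeff ε hε
  have hroots : f.roots = ∑ j, (m j) • ({α j} : Multiset ℂ) := by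
    rw [hfact, roots_prod _ _ (hfact ▸ hf.ne_zero)]
    simp [Finset.sum_eq_multiset_sum, Multiset.bind, Multiset.join]
  have hmem : ∀ b ∈ f.roots, ∃ j, b = α j := by
    intro b hb
    rw [hroots] at hb
    rw [Multiset.mem_sum] at hb
    obtain ⟨j, _, hj⟩ := hb
    rw [Multiset.mem_nsmul] at hj
    replace hj := hj.2
    exact ⟨j, Multiset.mem_singleton.mp hj⟩
  have hfcount : ∀ j, (f.roots.filter fun b => α j = b).card = m j := by
    intro j
    rw [← Multiset.count_eq_card_filter_eq, hroots, Multiset.count_sum']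
    rw [Finset.sum_eq_single j]
    · simp
    · intro i _ hij
      rw [Multiset.count_nsmul, Multiset.count_singleton,
        if_neg fun h => hij (hα h).symm, mul_zero]
    · simp
  have hcount : ∀ᶠ i in (U : Filter ℕ),
      ∀ j, ((g i).roots.filter fun z => dist z (α j) < ε).card = m j := by
    rw [eventually_all]
    intro j
    filter_upwards [hrel] with i hri
    have hri' := myRel_and_right hri hmem
    have hiff : ∀ (a b : ℂ), (dist a b < ε ∧ ∃ j', b = α j') →
        ((fun z => dist z (α j) < ε) a ↔ (fun b => α j = b) b) := by
      rintro a b ⟨hd, j', rfl⟩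
      constructor
      · intro hPa
        by_cases hjj : j = j'
        · rw [hjj]
        · exfalso
          have h2ε := hεsmall j j' hjj
          have : dist (α j) (α j') ≤ dist a (α j) + dist a (α j') :=
            dist_triangle_left _ _ _
          linarith
      · intro hQ
        simpa [← hQ] using hd
    have := myRel_filter_card hiff hri'
    rw [this, hfcount j]
  obtain ⟨i, hi⟩ := hcount.exists
  obtain ⟨j, hj⟩ := hg4 i
  exact hj (hi j)
end

section
/- Let s ≥ 3 and g_u(x) = x^s + t₁x + 1 over ℝ(t₁). The Bezoutian matrix B_u = M_s(g_u, g_u′) = (b_{ij}) has entries: b_{11} = s; b_{1s} = b_{s1} = t₁; b_{ij} = (1−s)t₁ when i + j = s + 1 and 2 ≤ i, j ≤ s−1; b_{ij} = −s when i + j = s + 2; b_{ss} = t₁²; and b_{ij} = 0 otherwise. -/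
open Polynomial

/-- The numerator `f₁(x)f₂(y) − f₁(y)f₂(x)` of the Bezoutian generating polynomial,
as an element of `F[x][y]` (inner variable `x`, outer variable `y`). -/
noncomputable def bezNum {F : Type*} [CommRing F] (f₁ f₂ : Polynomial F) :
    Polynomial (Polynomial F) :=
  C f₁ * f₂.map C - f₁.map C * C f₂

/-- The Bezoutian matrix: `α i j` (0-based) is the coefficient of
`x^(n-1-i) y^(n-1-j)` in the Bezoutian generating polynomial `B`. -/
noncomputable def bezMat {F : Type*} [CommRing F] (n : ℕ)
    (B : Polynomial (Polynomial F)) : Matrix (Fin n) (Fin n) F :=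
  fun i j => ((B.coeff (n - 1 - (j : ℕ))).coeff (n - 1 - (i : ℕ)))

/-- Auxiliary: the "geometric sum" `∑ x^i y^(n-1-i)` in `F[x][y]`. -/
noncomputable def gsAux (F : Type*) [CommRing F] (n : ℕ) : Polynomial (Polynomial F) :=
  ∑ i ∈ Finset.range n, (C X) ^ i * X ^ (n - 1 - i)

theorem gsAux_coeff (F : Type*) [CommRing F] (n a b : ℕ) :
    (((gsAux F n).coeff b).coeff a : F) = if a + b + 1 = n then 1 else 0 := by
  rw [gsAux, finset_sum_coeff]
  have h : ∀ i ∈ Finset.range n, (((C (X:Polynomial F) ^ i * X ^ (n-1-i)).coeff b).coeff a)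
      = if i = a ∧ a + b + 1 = n then (1:F) else 0 := by
    intro i hi
    simp only [← C_pow, coeff_C_mul, coeff_X_pow, mul_ite, mul_one, mul_zero,
      apply_ite (fun p : Polynomial F => coeff p a), coeff_zero, coeff_X_pow]
    rw [Finset.mem_range] at hi
    split_ifs <;> first | rfl | omega
  rw [finset_sum_coeff, Finset.sum_congr rfl h]
  simp only [ite_and, Finset.sum_ite_eq', Finset.mem_range]
  split_ifs <;> first | rfl | omega

/-- Auxiliary: the explicit Bezoutian polynomial of `x^s + t₁ x + 1`. -/
noncomputable def bezAux (F : Type*) [CommRing F] (s : ℕ) (t₁ : F) :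
    Polynomial (Polynomial F) :=
  C (C ((s:F)) * X ^ (s-1)) * X ^ (s-1) + C (C t₁) * gsAux F s
    - C (C ((s:F) * t₁) * X) * (X * gsAux F (s-2)) + C (C (t₁^2))
    - C (C ((s:F))) * gsAux F (s-1)

theorem bezAux_key (F : Type*) [CommRing F] (s : ℕ) (hs : 3 ≤ s) (t₁ : F) :
    (C (X : Polynomial F) - X) * bezAux F s t₁ =
      bezNum (X ^ s + C t₁ * X + 1) (X ^ s + C t₁ * X + 1).derivative := by
  obtain ⟨m, rfl⟩ : ∃ m, s = m + 3 := ⟨s - 3, by omega⟩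
  have h1 : (C (X : Polynomial F) - X) * gsAux F (m+3) = C X ^ (m+3) - X ^ (m+3) := by
    rw [gsAux, mul_comm, geom_sum₂_mul]
  have h2 : (C (X : Polynomial F) - X) * gsAux F (m+2) = C X ^ (m+2) - X ^ (m+2) := by
    rw [gsAux, mul_comm, geom_sum₂_mul]
  have h3 : (C (X : Polynomial F) - X) * gsAux F (m+1) = C X ^ (m+1) - X ^ (m+1) := by
    rw [gsAux, mul_comm, geom_sum₂_mul]
  have hd : (X ^ (m+3) + C t₁ * X + 1 : Polynomial F).derivative
      = C ((m+3 : ℕ) : F) * X ^ (m+2) + C t₁ := by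
    simp [derivative_X_pow]
    have h23 : (C 2 + 1 : Polynomial F) = C 3 := by rw [← C_1, ← C_add]; norm_num
    rw [add_assoc, h23]
  rw [hd, bezAux, bezNum]
  simp only [show m+3-1 = m+2 from rfl, show m+3-2 = m+1 from rfl,
    Polynomial.map_add, Polynomial.map_mul, Polynomial.map_pow, Polynomial.map_one,
    Polynomial.map_natCast, map_add, map_mul, map_pow, map_one, map_natCast, map_X, map_C]
  linear_combination (C (C t₁)) * h1
    - ((m+3 : ℕ) : Polynomial (Polynomial F)) * C (C t₁) * C (X:Polynomial F) * X * h3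
    - ((m+3 : ℕ) : Polynomial (Polynomial F)) * h2

lemma coeff_X_mul_ite {R : Type*} [CommRing R] (p : Polynomial R) (n : ℕ) :
    (X * p).coeff n = if 1 ≤ n then p.coeff (n-1) else 0 := by
  rcases n with _|n
  · simp [mul_coeff_zero]
  · simp [coeff_X_mul]

theorem bezAux_coeff (F : Type*) [Field F] (s a b : ℕ) (t₁ : F) :
    ((bezAux F s t₁).coeff b).coeff a =
      (if a = s-1 ∧ b = s-1 then (s:F) else 0)
      + (if a + b + 1 = s then t₁ else 0)
      - (if 1 ≤ a ∧ 1 ≤ b ∧ (a-1) + (b-1) + 1 = s - 2 then (s:F)*t₁ else 0)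
      + (if a = 0 ∧ b = 0 then t₁^2 else 0)
      - (if a + b + 1 = s - 1 then (s:F) else 0) := by
  simp only [bezAux, coeff_sub, coeff_add, coeff_C_mul, coeff_X_pow, coeff_X_mul_ite,
    gsAux_coeff, coeff_C, mul_ite, mul_one, mul_zero, ite_mul, zero_mul, one_mul, mul_assoc,
    apply_ite (fun p : Polynomial F => coeff p a), coeff_zero, coeff_C_mul, coeff_C,
    coeff_X_mul_ite, gsAux_coeff]
  refine congrArg₂ (· - ·) (congrArg₂ (· + ·) (congrArg₂ (· - ·) (congrArg₂ (· + ·) ?_ ?_)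
    ?_) ?_) ?_ <;> split_ifs <;> first | rfl | (exfalso; omega)

set_option maxHeartbeats 2000000 in
/-- Entries of the Bezoutian matrix of `g(x) = x^s + t₁x + 1` (`s ≥ 3`); indices are
written `1`-based as in the paper, `I = i + 1`, `J = j + 1`. -/
theorem stmt14 {F : Type*} [Field F] [CharZero F] (s : ℕ) (hs : 3 ≤ s) (t₁ : F)
    (B : Polynomial (Polynomial F))
    (hB : (C (X : Polynomial F) - X) * B =
      bezNum (X ^ s + C t₁ * X + 1) (X ^ s + C t₁ * X + 1).derivative) :
    ∀ i j : Fin s,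
      bezMat s B i j =
        if ((i : ℕ) + 1 = 1 ∧ (j : ℕ) + 1 = 1) then (s : F)
        else if (((i : ℕ) + 1 = 1 ∧ (j : ℕ) + 1 = s) ∨
            ((i : ℕ) + 1 = s ∧ (j : ℕ) + 1 = 1)) then t₁
        else if ((i : ℕ) + 1 + ((j : ℕ) + 1) = s + 1 ∧
            2 ≤ (i : ℕ) + 1 ∧ (i : ℕ) + 1 ≤ s - 1 ∧
            2 ≤ (j : ℕ) + 1 ∧ (j : ℕ) + 1 ≤ s - 1) then (1 - (s : F)) * t₁
        else if ((i : ℕ) + 1 + ((j : ℕ) + 1) = s + 2) then -(s : F)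
        else if ((i : ℕ) + 1 = s ∧ (j : ℕ) + 1 = s) then t₁ ^ 2
        else 0 := by
  have hC : (C (X : Polynomial F) - X) ≠ (0 : Polynomial (Polynomial F)) := by
    intro h
    have h1 := congrArg (fun p => (Polynomial.coeff p 1)) h
    simp at h1
  have hBB : B = bezAux F s t₁ :=
    mul_left_cancel₀ hC (hB.trans (bezAux_key F s hs t₁).symm)
  intro i j
  have hi := i.isLt
  have hj := j.isLt
  rw [bezMat, hBB, bezAux_coeff]
  by_cases h1 : ((i : ℕ) + 1 = 1 ∧ (j : ℕ) + 1 = 1)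
  · rw [if_pos h1]
    split_ifs <;> first | (exfalso; omega) | ring
  rw [if_neg h1]
  by_cases h2 : (((i : ℕ) + 1 = 1 ∧ (j : ℕ) + 1 = s) ∨ ((i : ℕ) + 1 = s ∧ (j : ℕ) + 1 = 1))
  · rw [if_pos h2]
    split_ifs <;> first | (exfalso; omega) | ring
  rw [if_neg h2]
  by_cases h3 : ((i : ℕ) + 1 + ((j : ℕ) + 1) = s + 1 ∧ 2 ≤ (i : ℕ) + 1 ∧ (i : ℕ) + 1 ≤ s - 1 ∧
      2 ≤ (j : ℕ) + 1 ∧ (j : ℕ) + 1 ≤ s - 1)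
  · rw [if_pos h3]
    split_ifs <;> first | (exfalso; omega) | ring
  rw [if_neg h3]
  by_cases h4 : ((i : ℕ) + 1 + ((j : ℕ) + 1) = s + 2)
  · rw [if_pos h4]
    split_ifs <;> first | (exfalso; omega) | ring
  rw [if_neg h4]
  by_cases h5 : ((i : ℕ) + 1 = s ∧ (j : ℕ) + 1 = s)
  · rw [if_pos h5]
    split_ifs <;> first | (exfalso; omega) | ring
  rw [if_neg h5]
  split_ifs <;> first | (exfalso; omega) | ring
end

section
/- Stability of root count past the largest discriminant root: Let v ∈ ℝ^{s+1}, f_v(t;x) = x^n + t·g_v(x), P_v(t) = det M_n(f_v(t;x), f_v′(t;x)), and α_v = max{α ∈ ℝ : P_v(α) = 0}. If there exists ρ₀ > α_v such that the number of distinct real roots N of f_v(ξ;x) equals γ₀ for all ξ > ρ₀, then N_{f_v(ξ;x)} = γ₀ for all ξ > α_v. -/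
open Polynomial

lemma eval_map_C (q : ℝ[X]) (r : ℝ) :
    Polynomial.eval (Polynomial.C r) (q.map Polynomial.C) = Polynomial.C (q.eval r) := by
  rw [Polynomial.eval_map]
  show q.comp (C r) = _
  rw [Polynomial.comp_C]

lemma det_zero_of_double (n : ℕ) (hn : 0 < n) (f : ℝ[X]) (hf : f.natDegree ≤ n)
    (Bp : Polynomial (Polynomial ℝ))
    (hB : (C (X : Polynomial ℝ) - X) * Bp = bezNum f f.derivative)
    (r : ℝ) (h0 : f.eval r = 0) (h1 : f.derivative.eval r = 0) :
    (bezMat n Bp).det = 0 := by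
  have hne : Nonempty (Fin n) := ⟨⟨0, hn⟩⟩
  by_cases hBp : Bp = 0
  · subst hBp
    have : bezMat n (0 : Polynomial (Polynomial ℝ)) = 0 := by
      ext i j; simp [bezMat]
    rw [this]
    exact Matrix.det_zero
  -- degree bound
  have hXC : (C (X : ℝ[X]) - X).natDegree = 1 := by
    have : (C (X : ℝ[X]) - X) = -(X - C (X : ℝ[X])) := by ring
    rw [this, natDegree_neg, natDegree_X_sub_C]
  have hXCne : (C (X : ℝ[X]) - X) ≠ 0 := by
    intro h
    have := hXC
    rw [h] at this
    simp at this
  have hbez : (bezNum f f.derivative).natDegree ≤ n := by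
    unfold bezNum
    refine le_trans (natDegree_sub_le _ _) (max_le ?_ ?_)
    · refine le_trans (natDegree_mul_le) ?_
      have h2 : (f.derivative.map (C : ℝ →+* ℝ[X])).natDegree ≤ n := by
        refine le_trans (natDegree_map_le) ?_
        exact le_trans (natDegree_derivative_le f) (by omega)
      simpa using h2
    · refine le_trans (natDegree_mul_le) ?_
      have h2 : (f.map (C : ℝ →+* ℝ[X])).natDegree ≤ n := le_trans (natDegree_map_le) hf
      simpa using h2
  have hdeg : Bp.natDegree < n := by
    have := natDegree_mul hXCne hBp
    rw [hB, hXC] at this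
    omega
  -- q = 0
  have hq : Polynomial.eval (Polynomial.C r) Bp = 0 := by
    have e1 : Polynomial.eval (Polynomial.C r) ((C (X : ℝ[X]) - X) * Bp)
        = (X - C r) * Polynomial.eval (Polynomial.C r) Bp := by
      simp [eval_mul, eval_sub, eval_C, eval_X]
    have e2 : Polynomial.eval (Polynomial.C r) (bezNum f f.derivative) = 0 := by
      unfold bezNum
      simp [eval_mul, eval_sub, eval_C, eval_map_C, h0, h1]
    rw [hB, e2] at e1
    rcases mul_eq_zero.mp e1.symm with h | h
    · exact absurd h (X_sub_C_ne_zero r)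
    · exact h
  have hcoef : ∀ m, ∑ k ∈ Finset.range n, (Bp.coeff k).coeff m * r ^ k = 0 := by
    intro m
    have h3 : (∑ k ∈ Finset.range n, Bp.coeff k * (Polynomial.C r) ^ k) = 0 := by
      rw [← Polynomial.eval_eq_sum_range' hdeg]; exact hq
    have h4 := congrArg (fun q => Polynomial.coeff q m) h3
    simp only [Polynomial.finset_sum_coeff, Polynomial.coeff_zero] at h4
    have h5 : ∀ k, Polynomial.coeff (Bp.coeff k * (Polynomial.C r) ^ k) m = (Bp.coeff k).coeff m * r ^ k := by
      intro k; rw [← Polynomial.C_pow, Polynomial.coeff_mul_C]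
    rw [← h4]; exact Finset.sum_congr rfl fun k _ => (h5 k).symm
  -- kernel vector
  classical
  set v : Fin n → ℝ := fun j => r ^ (n - 1 - (j : ℕ)) with hv
  have hvne : v ≠ 0 := by
    intro h
    have h2 : r ^ (n - 1 - ((⟨n - 1, by omega⟩ : Fin n) : ℕ)) = 0 := congrFun h _
    simp only [Nat.sub_self] at h2
    simp at h2
  have hmv : (bezMat n Bp).mulVec v = 0 := by
    funext i
    show ∑ j : Fin n, (Bp.coeff (n - 1 - (j : ℕ))).coeff (n - 1 - (i : ℕ)) * r ^ (n - 1 - (j : ℕ)) = 0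
    rw [Fin.sum_univ_eq_sum_range (fun j => (Bp.coeff (n - 1 - j)).coeff (n - 1 - (i : ℕ)) * r ^ (n - 1 - j)) n,
      Finset.sum_range_reflect (fun k => (Bp.coeff k).coeff (n - 1 - (i : ℕ)) * r ^ k) n]
    exact hcoef _
  exact Matrix.exists_mulVec_eq_zero_iff.mp ⟨v, hvne, hmv⟩



lemma one_root (q : ℝ[X]) (a b : ℝ) (hab : a < b)
    (hd : ∀ x ∈ Set.Icc a b, 0 < q.derivative.eval x)
    (ha : q.eval a < 0) (hb : 0 < q.eval b) :
    (∃ x ∈ Set.Ioo a b, q.eval x = 0) ∧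
      ∀ x ∈ Set.Icc a b, ∀ y ∈ Set.Icc a b, q.eval x = 0 → q.eval y = 0 → x = y := by
  have hmono : StrictMonoOn (fun x => q.eval x) (Set.Icc a b) := by
    apply strictMonoOn_of_deriv_pos (convex_Icc a b) (q.continuous).continuousOn
    intro x hx
    rw [interior_Icc] at hx
    rw [Polynomial.deriv]
    exact hd x (Set.Ioo_subset_Icc_self hx)
  constructor
  · have h0 : (0:ℝ) ∈ Set.Ioo (q.eval a) (q.eval b) := ⟨ha, hb⟩
    have h2 := intermediate_value_Ioo (le_of_lt hab) (q.continuous).continuousOn h0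
    obtain ⟨x, hx1, hx2⟩ := h2
    exact ⟨x, hx1, hx2⟩
  · intro x hx y hy h1 h2
    exact hmono.injOn hx hy (h1.trans h2.symm)

lemma local_one_root_pos (p₀ G : ℝ[X]) (ξ₀ r : ℝ) (h0 : p₀.eval r = 0)
    (hd : 0 < p₀.derivative.eval r) (ε₀ : ℝ) (hε₀ : 0 < ε₀) :
    ∃ ε, 0 < ε ∧ ε ≤ ε₀ ∧ ∀ᶠ ξ in nhds ξ₀,
      (∃ x ∈ Set.Ioo (r - ε) (r + ε), (p₀ + C (ξ - ξ₀) * G).eval x = 0) ∧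
      (∀ x ∈ Set.Icc (r - ε) (r + ε), ∀ y ∈ Set.Icc (r - ε) (r + ε),
        (p₀ + C (ξ - ξ₀) * G).eval x = 0 → (p₀ + C (ξ - ξ₀) * G).eval y = 0 → x = y) := by
  set d := p₀.derivative.eval r with hdd
  have hc : ContinuousAt (fun x => p₀.derivative.eval x) r :=
    (p₀.derivative.continuous).continuousAt
  rw [Metric.continuousAt_iff] at hc
  obtain ⟨δ, hδ, hδc⟩ := hc (d/2) (by linarith)
  set ε := min (δ/2) ε₀ with hε
  have hεpos : 0 < ε := lt_min (by linarith) hε₀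
  have hεle : ε ≤ ε₀ := min_le_right _ _
  refine ⟨ε, hεpos, hεle, ?_⟩
  have hder : ∀ x ∈ Set.Icc (r-ε) (r+ε), d/2 < p₀.derivative.eval x := by
    intro x hx
    have h2 : |x - r| ≤ ε := abs_sub_le_iff.mpr ⟨by linarith [hx.2], by linarith [hx.1]⟩
    have h3 : ε < δ := lt_of_le_of_lt (min_le_left _ _) (by linarith)
    have h1 : dist x r < δ := by rw [Real.dist_eq]; linarith
    have h4 := hδc h1
    rw [Real.dist_eq] at h4
    have h5 := abs_sub_lt_iff.mp h4
    have := h5.2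
    simp only [← hdd] at this ⊢
    linarith
  have hmono0 : StrictMonoOn (fun x => p₀.eval x) (Set.Icc (r-ε) (r+ε)) := by
    apply strictMonoOn_of_deriv_pos (convex_Icc _ _) (p₀.continuous).continuousOn
    intro x hx
    rw [interior_Icc] at hx
    rw [Polynomial.deriv]
    have := hder x (Set.Ioo_subset_Icc_self hx)
    linarith
  have hrmem : r ∈ Set.Icc (r-ε) (r+ε) := ⟨by linarith, by linarith⟩
  have hamem : r - ε ∈ Set.Icc (r-ε) (r+ε) := ⟨le_refl _, by linarith⟩
  have hbmem : r + ε ∈ Set.Icc (r-ε) (r+ε) := ⟨by linarith, le_refl _⟩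
  have hA : p₀.eval (r-ε) < 0 := by
    have := hmono0 hamem hrmem (by linarith)
    simpa [h0] using this
  have hB2 : 0 < p₀.eval (r+ε) := by
    have := hmono0 hrmem hbmem (by linarith)
    simpa [h0] using this
  obtain ⟨M1, hM1⟩ := (isCompact_Icc : IsCompact (Set.Icc (r-ε) (r+ε))).exists_bound_of_continuousOn
    (G.continuous).continuousOn
  obtain ⟨M2, hM2⟩ := (isCompact_Icc : IsCompact (Set.Icc (r-ε) (r+ε))).exists_bound_of_continuousOn
    (G.derivative.continuous).continuousOn
  set M := max (max M1 M2) 0 + 1 with hM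
  have hMpos : 0 < M := by positivity
  have hMG : ∀ x ∈ Set.Icc (r-ε) (r+ε), |G.eval x| ≤ M ∧ |G.derivative.eval x| ≤ M := by
    intro x hx
    have b1 := hM1 x hx
    have b2 := hM2 x hx
    rw [Real.norm_eq_abs] at b1 b2
    constructor
    · calc |G.eval x| ≤ M1 := b1
        _ ≤ M := by simp [hM]; nlinarith [le_max_left (max M1 M2) 0, le_max_left M1 M2]
    · calc |G.derivative.eval x| ≤ M2 := b2
        _ ≤ M := by nlinarith [le_max_left (max M1 M2) 0, le_max_right M1 M2]
  set c := min (d/2) (min (-p₀.eval (r-ε)) (p₀.eval (r+ε))) with hcdef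
  have hcpos : 0 < c := by
    apply lt_min (by linarith)
    exact lt_min (by linarith) hB2
  have hev : ∀ᶠ ξ in nhds ξ₀, |ξ - ξ₀| < c / M := by
    have hball : Metric.ball ξ₀ (c/M) ∈ nhds ξ₀ := Metric.ball_mem_nhds _ (div_pos hcpos hMpos)
    filter_upwards [hball] with ξ hξ
    rw [Metric.mem_ball, Real.dist_eq] at hξ
    exact hξ
  filter_upwards [hev] with ξ hξ
  set e := ξ - ξ₀ with hedef
  have he : |e| * M < c := by
    have := (lt_div_iff₀ hMpos).mp hξ
    exact this
  set q := p₀ + C e * G with hq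
  have hqev : ∀ x, q.eval x = p₀.eval x + e * G.eval x := by intro x; simp [hq]
  have hqd : ∀ x, q.derivative.eval x = p₀.derivative.eval x + e * G.derivative.eval x := by
    intro x; simp [hq, derivative_add, derivative_C_mul]
  have hbound : ∀ x ∈ Set.Icc (r-ε) (r+ε), |e * G.eval x| < c ∧ |e * G.derivative.eval x| < c := by
    intro x hx
    obtain ⟨b1, b2⟩ := hMG x hx
    constructor
    · rw [abs_mul]
      calc |e| * |G.eval x| ≤ |e| * M := mul_le_mul_of_nonneg_left b1 (abs_nonneg e)
        _ < c := he
    · rw [abs_mul]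
      calc |e| * |G.derivative.eval x| ≤ |e| * M := mul_le_mul_of_nonneg_left b2 (abs_nonneg e)
        _ < c := he
  have hderq : ∀ x ∈ Set.Icc (r-ε) (r+ε), 0 < q.derivative.eval x := by
    intro x hx
    rw [hqd]
    have h1 := (hbound x hx).2
    have h2 := hder x hx
    have h3 := neg_abs_le (e * G.derivative.eval x)
    have hcle : c ≤ d/2 := min_le_left _ _
    linarith
  have har : q.eval (r-ε) < 0 := by
    rw [hqev]
    have h1 := (hbound _ hamem).1
    have h2 := le_abs_self (e * G.eval (r-ε))
    have hcle : c ≤ -p₀.eval (r-ε) := le_trans (min_le_right _ _) (min_le_left _ _)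
    linarith
  have hbr : 0 < q.eval (r+ε) := by
    rw [hqev]
    have h1 := (hbound _ hbmem).1
    have h3 := neg_abs_le (e * G.eval (r+ε))
    have hcle : c ≤ p₀.eval (r+ε) := le_trans (min_le_right _ _) (min_le_right _ _)
    linarith
  exact one_root q (r-ε) (r+ε) (by linarith) hderq har hbr

lemma local_one_root (p₀ G : ℝ[X]) (ξ₀ r : ℝ) (h0 : p₀.eval r = 0)
    (hd : p₀.derivative.eval r ≠ 0) (ε₀ : ℝ) (hε₀ : 0 < ε₀) :
    ∃ ε, 0 < ε ∧ ε ≤ ε₀ ∧ ∀ᶠ ξ in nhds ξ₀,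
      (∃ x ∈ Set.Ioo (r - ε) (r + ε), (p₀ + C (ξ - ξ₀) * G).eval x = 0) ∧
      (∀ x ∈ Set.Icc (r - ε) (r + ε), ∀ y ∈ Set.Icc (r - ε) (r + ε),
        (p₀ + C (ξ - ξ₀) * G).eval x = 0 → (p₀ + C (ξ - ξ₀) * G).eval y = 0 → x = y) := by
  rcases lt_or_gt_of_ne hd with hneg | hpos
  · obtain ⟨ε, h1, h2, h3⟩ := local_one_root_pos (-p₀) (-G) ξ₀ r (by simp [h0])
      (by simp [derivative_neg]; linarith) ε₀ hε₀
    refine ⟨ε, h1, h2, ?_⟩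
    filter_upwards [h3] with ξ hξ
    have hkey : (-p₀ + C (ξ - ξ₀) * -G) = -(p₀ + C (ξ - ξ₀) * G) := by ring
    rw [hkey] at hξ
    simp only [eval_neg, neg_eq_zero] at hξ
    exact hξ
  · exact local_one_root_pos p₀ G ξ₀ r h0 hpos ε₀ hε₀



lemma pne (n : ℕ) (g : ℝ[X]) (hg : g.natDegree < n) (ξ : ℝ) :
    (X ^ n + C ξ * g : ℝ[X]) ≠ 0 := by
  intro h
  have h1 : ((X ^ n + C ξ * g : ℝ[X])).coeff n = 1 := by
    simp [coeff_add, coeff_X_pow, coeff_C_mul, coeff_eq_zero_of_natDegree_lt hg]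
  rw [h] at h1
  simp at h1

lemma root_bound (n : ℕ) (hn : 0 < n) (g : ℝ[X]) (hg : g.natDegree < n) {ξ x : ℝ}
    (hx : (X ^ n + C ξ * g : ℝ[X]).eval x = 0) :
    |x| ≤ max 1 (|ξ| * (∑ k ∈ Finset.range n, |g.coeff k|)) := by
  rcases le_or_gt (|x|) 1 with h | h
  · exact le_trans h (le_max_left _ _)
  refine le_trans ?_ (le_max_right _ _)
  set GB := ∑ k ∈ Finset.range n, |g.coeff k| with hGB
  have hev : x ^ n + ξ * g.eval x = 0 := by simpa using hx
  have hgs : g.eval x = ∑ k ∈ Finset.range n, g.coeff k * x ^ k :=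
    Polynomial.eval_eq_sum_range' hg x
  have hgb : |g.eval x| ≤ GB * |x| ^ (n - 1) := by
    rw [hgs, hGB, Finset.sum_mul]
    refine le_trans (Finset.abs_sum_le_sum_abs _ _) (Finset.sum_le_sum ?_)
    intro k hk
    rw [abs_mul, abs_pow]
    apply mul_le_mul_of_nonneg_left _ (abs_nonneg _)
    apply pow_le_pow_right₀ (le_of_lt h)
    have := Finset.mem_range.mp hk
    omega
  have hxpow : |x| ^ n = |ξ| * |g.eval x| := by
    have : x ^ n = -(ξ * g.eval x) := by linarith
    calc |x| ^ n = |x ^ n| := (abs_pow x n).symm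
      _ = |ξ * g.eval x| := by rw [this, abs_neg]
      _ = |ξ| * |g.eval x| := abs_mul _ _
  have hxn : |x| ^ n = |x| * |x| ^ (n - 1) := by
    rw [← pow_succ']
    congr 1
    omega
  have hpos : (0:ℝ) < |x| ^ (n - 1) := pow_pos (by linarith) _
  have : |x| * |x| ^ (n - 1) ≤ |ξ| * GB * |x| ^ (n - 1) := by
    rw [← hxn, hxpow]
    calc |ξ| * |g.eval x| ≤ |ξ| * (GB * |x| ^ (n - 1)) :=
          mul_le_mul_of_nonneg_left hgb (abs_nonneg _)
      _ = |ξ| * GB * |x| ^ (n - 1) := by ring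
  exact le_of_mul_le_mul_right (by linarith) hpos


lemma locConst (n : ℕ) (hn : 0 < n) (g : ℝ[X]) (hg : g.natDegree < n) (ξ₀ : ℝ)
    (hsimple : ∀ x : ℝ, (X ^ n + C ξ₀ * g : ℝ[X]).eval x = 0 →
      (X ^ n + C ξ₀ * g : ℝ[X]).derivative.eval x ≠ 0) :
    ∀ᶠ ξ in nhds ξ₀, (X ^ n + C ξ * g : ℝ[X]).roots.toFinset.card
      = (X ^ n + C ξ₀ * g : ℝ[X]).roots.toFinset.card := by
  classical
  set p₀ : ℝ[X] := X ^ n + C ξ₀ * g with hp₀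
  have hfam : ∀ ξ : ℝ, (X ^ n + C ξ * g : ℝ[X]) = p₀ + C (ξ - ξ₀) * g := by
    intro ξ; rw [hp₀, map_sub]; ring
  set R : Finset ℝ := p₀.roots.toFinset with hR
  have hmemR : ∀ x : ℝ, x ∈ R ↔ p₀.eval x = 0 := by
    intro x
    rw [hR, Multiset.mem_toFinset, Polynomial.mem_roots (pne n g hg ξ₀)]
    exact Iff.rfl
  obtain ⟨ε₀, hε₀pos, hgap⟩ : ∃ ε₀ > 0, ∀ r ∈ R, ∀ r' ∈ R, r ≠ r' → 2 * ε₀ < |r - r'| := by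
    set D := (R ×ˢ R).filter (fun q => q.1 ≠ q.2) with hD
    rcases D.eq_empty_or_nonempty with hDe | hDn
    · refine ⟨1, one_pos, ?_⟩
      intro r hr r' hr' hne
      exfalso
      have hmem : (r, r') ∈ D := by
        rw [hD, Finset.mem_filter, Finset.mem_product]; exact ⟨⟨hr, hr'⟩, hne⟩
      rw [hDe] at hmem
      simp at hmem
    · obtain ⟨q₀, hq₀D, hq₀min⟩ := D.exists_min_image (fun q => |q.1 - q.2|) hDn
      have hq₀ne : q₀.1 ≠ q₀.2 := (Finset.mem_filter.mp hq₀D).2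
      have hq₀pos : 0 < |q₀.1 - q₀.2| := abs_pos.mpr (sub_ne_zero.mpr hq₀ne)
      refine ⟨|q₀.1 - q₀.2| / 3, by linarith, ?_⟩
      intro r hr r' hr' hne
      have hmem : (r, r') ∈ D := by
        rw [hD, Finset.mem_filter, Finset.mem_product]; exact ⟨⟨hr, hr'⟩, hne⟩
      have := hq₀min (r, r') hmem
      simp only [] at this
      linarith
  have hchoice : ∀ r ∈ R, ∃ ε, 0 < ε ∧ ε ≤ ε₀ ∧ ∀ᶠ ξ in nhds ξ₀,
      (∃ x ∈ Set.Ioo (r - ε) (r + ε), (p₀ + C (ξ - ξ₀) * g).eval x = 0) ∧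
      (∀ x ∈ Set.Icc (r - ε) (r + ε), ∀ y ∈ Set.Icc (r - ε) (r + ε),
        (p₀ + C (ξ - ξ₀) * g).eval x = 0 → (p₀ + C (ξ - ξ₀) * g).eval y = 0 → x = y) := by
    intro r hr
    have h0 : p₀.eval r = 0 := (hmemR r).mp hr
    exact local_one_root p₀ g ξ₀ r h0 (hsimple r h0) ε₀ hε₀pos
  choose! εf hεf1 hεf2 hεf3 using hchoice
  set GB := ∑ k ∈ Finset.range n, |g.coeff k| with hGB
  have hGBnn : 0 ≤ GB := Finset.sum_nonneg fun k _ => abs_nonneg _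
  set CC := max 1 ((|ξ₀| + 1) * GB) with hCC
  set U : Set ℝ := ⋃ r ∈ R, Set.Ioo (r - εf r) (r + εf r) with hU
  have hUopen : IsOpen U := isOpen_biUnion fun r _ => isOpen_Ioo
  set Kbig := Set.Icc (-CC) CC \ U with hK
  have hKcomp : IsCompact Kbig := isCompact_Icc.diff hUopen
  have hne0 : ∀ x ∈ Kbig, p₀.eval x ≠ 0 := by
    intro x hx h0
    have hxR : x ∈ R := (hmemR x).mpr h0
    apply hx.2
    rw [hU]
    refine Set.mem_biUnion hxR ?_
    have := hεf1 x hxR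
    exact ⟨by linarith, by linarith⟩
  obtain ⟨c, hcpos, hcmin⟩ : ∃ c > 0, ∀ x ∈ Kbig, c ≤ |p₀.eval x| := by
    rcases Kbig.eq_empty_or_nonempty with hKe | hKn
    · exact ⟨1, one_pos, by rw [hKe]; simp⟩
    · obtain ⟨x₀, hx₀, hmin⟩ := hKcomp.exists_isMinOn hKn
        ((continuous_abs.comp p₀.continuous).continuousOn)
      exact ⟨|p₀.eval x₀|, abs_pos.mpr (hne0 _ hx₀), fun x hx => hmin hx⟩
  obtain ⟨Mg, hMg⟩ := (isCompact_Icc : IsCompact (Set.Icc (-CC) CC)).exists_bound_of_continuousOn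
    g.continuous.continuousOn
  set M := max Mg 0 + 1 with hM
  have hMpos : 0 < M := by positivity
  have hMb : ∀ x ∈ Set.Icc (-CC) CC, |g.eval x| ≤ M := by
    intro x hx
    have h1 := hMg x hx
    rw [Real.norm_eq_abs] at h1
    have h2 := le_max_left Mg 0
    rw [hM]; linarith
  have hglob : ∀ᶠ ξ in nhds ξ₀, ∀ x : ℝ, (p₀ + C (ξ - ξ₀) * g).eval x = 0 →
      ∃ r ∈ R, x ∈ Set.Ioo (r - εf r) (r + εf r) := by
    have hball : Metric.ball ξ₀ (min 1 (c / M)) ∈ nhds ξ₀ :=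
      Metric.ball_mem_nhds _ (lt_min one_pos (div_pos hcpos hMpos))
    filter_upwards [hball] with ξ hξ
    rw [Metric.mem_ball, Real.dist_eq] at hξ
    intro x hx
    have hroot : (X ^ n + C ξ * g : ℝ[X]).eval x = 0 := by rw [hfam ξ]; exact hx
    have hb := root_bound n hn g hg hroot
    have hξ1 : |ξ - ξ₀| < 1 := lt_of_lt_of_le hξ (min_le_left _ _)
    have hξb : |ξ| ≤ |ξ₀| + 1 := by
      calc |ξ| = |ξ₀ + (ξ - ξ₀)| := by ring_nf
        _ ≤ |ξ₀| + |ξ - ξ₀| := abs_add_le _ _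
        _ ≤ |ξ₀| + 1 := by linarith
    have hxCC : x ∈ Set.Icc (-CC) CC := by
      rw [Set.mem_Icc]
      have hle : |x| ≤ CC := by
        refine le_trans hb ?_
        rw [hCC]
        exact max_le_max (le_refl 1) (mul_le_mul_of_nonneg_right hξb hGBnn)
      exact abs_le.mp hle
    by_contra hnotU
    push_neg at hnotU
    have hxK : x ∈ Kbig := by
      refine ⟨hxCC, ?_⟩
      rw [hU]
      simp only [Set.mem_iUnion, not_exists]
      intro r hr
      exact hnotU r hr
    have h1 := hcmin x hxK
    have h2 : p₀.eval x = -((ξ - ξ₀) * g.eval x) := by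
      simp only [eval_add, eval_mul, eval_C] at hx
      linarith
    have h3 : |p₀.eval x| ≤ |ξ - ξ₀| * M := by
      rw [h2, abs_neg, abs_mul]
      exact mul_le_mul_of_nonneg_left (hMb x hxCC) (abs_nonneg _)
    have h4 : |ξ - ξ₀| * M < c := by
      have h5 := lt_of_lt_of_le hξ (min_le_right _ _)
      exact (lt_div_iff₀ hMpos).mp h5
    linarith
  have hloc := (Filter.eventually_all_finset R).mpr hεf3
  filter_upwards [hglob, hloc] with ξ hg1 hg2
  have hmemS : ∀ x : ℝ, x ∈ (X ^ n + C ξ * g : ℝ[X]).roots.toFinset ↔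
      (p₀ + C (ξ - ξ₀) * g).eval x = 0 := by
    intro x
    rw [Multiset.mem_toFinset, Polynomial.mem_roots (pne n g hg ξ), Polynomial.IsRoot, hfam ξ]
  apply Finset.card_bij (fun x hx => Classical.choose (hg1 x ((hmemS x).mp hx)))
  · intro a ha
    exact (Classical.choose_spec (hg1 a ((hmemS a).mp ha))).1
  · intro a₁ ha₁ a₂ ha₂ heq
    obtain ⟨hrR, hmem1⟩ := Classical.choose_spec (hg1 a₁ ((hmemS a₁).mp ha₁))
    obtain ⟨hrR2, hmem2⟩ := Classical.choose_spec (hg1 a₂ ((hmemS a₂).mp ha₂))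
    rw [← heq] at hmem2
    exact (hg2 _ hrR).2 a₁ (Set.Ioo_subset_Icc_self hmem1) a₂ (Set.Ioo_subset_Icc_self hmem2)
      ((hmemS a₁).mp ha₁) ((hmemS a₂).mp ha₂)
  · intro r hrR
    obtain ⟨x, hxIoo, hx0⟩ := (hg2 r hrR).1
    have hxS : x ∈ (X ^ n + C ξ * g : ℝ[X]).roots.toFinset := (hmemS x).mpr hx0
    refine ⟨x, hxS, ?_⟩
    obtain ⟨hr'R, hmem'⟩ := Classical.choose_spec (hg1 x ((hmemS x).mp hxS))
    by_contra hne
    have hgap2 := hgap _ hr'R r hrR hne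
    have e1 := hεf2 _ hr'R
    have e2 := hεf2 r hrR
    have habs : |Classical.choose (hg1 x ((hmemS x).mp hxS)) - r| < 2 * ε₀ := by
      rw [abs_sub_lt_iff]
      obtain ⟨a1, a2⟩ := hmem'
      obtain ⟨b1, b2⟩ := hxIoo
      constructor <;> linarith
    linarith


/-- Stability of the real root count past the largest real root `α` of
`P(t) = det M_n(f(t;x), f′(t;x))`, where `f(t;x) = xⁿ + t·g(x)`: if the number of
distinct real roots of `f(ξ;x)` is constantly `γ₀` beyond some `ρ₀ > α`, then it is
`γ₀` for all `ξ > α`. -/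
theorem stmt16 (s n : ℕ) (hsn : s < n) (g : Polynomial ℝ) (hg : g.natDegree ≤ s)
    (B : ℝ → Polynomial (Polynomial ℝ))
    (hB : ∀ ξ : ℝ, (C (X : Polynomial ℝ) - X) * B ξ =
      bezNum (X ^ n + C ξ * g) (X ^ n + C ξ * g).derivative)
    (α : ℝ)
    (hαroot : (bezMat n (B α)).det = 0)
    (hαmax : ∀ β : ℝ, (bezMat n (B β)).det = 0 → β ≤ α)
    (γ₀ : ℕ) (ρ₀ : ℝ) (hρ : α < ρ₀)
    (hstable : ∀ ξ : ℝ, ρ₀ < ξ →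
      (X ^ n + C ξ * g : Polynomial ℝ).roots.toFinset.card = γ₀) :
    ∀ ξ : ℝ, α < ξ →
      (X ^ n + C ξ * g : Polynomial ℝ).roots.toFinset.card = γ₀ := by
  intro ξ hξ
  have hn : 0 < n := Nat.lt_of_le_of_lt (Nat.zero_le s) hsn
  have hg' : g.natDegree < n := lt_of_le_of_lt hg hsn
  have hdegp : ∀ ζ : ℝ, (X ^ n + C ζ * g : ℝ[X]).natDegree ≤ n := by
    intro ζ
    refine le_trans (natDegree_add_le _ _) (max_le ?_ ?_)
    · exact le_of_eq (natDegree_X_pow n)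
    · exact le_trans (natDegree_C_mul_le _ _) (le_of_lt hg')
  have hsimple : ∀ ζ : ℝ, α < ζ → ∀ x : ℝ, (X ^ n + C ζ * g : ℝ[X]).eval x = 0 →
      (X ^ n + C ζ * g : ℝ[X]).derivative.eval x ≠ 0 := by
    intro ζ hζ x hx hdx
    have hdet := det_zero_of_double n hn _ (hdegp ζ) (B ζ) (hB ζ) x hx hdx
    linarith [hαmax ζ hdet]
  set N : ℝ → ℕ := fun ζ => (X ^ n + C ζ * g : ℝ[X]).roots.toFinset.card with hN
  have hcont : ContinuousOn N (Set.Ioi α) := by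
    intro ζ hζ
    have hev := locConst n hn g hg' ζ (hsimple ζ hζ)
    have hca : ContinuousAt N ζ := by
      apply Filter.EventuallyEq.continuousAt (y := N ζ)
      exact hev
    exact hca.continuousWithinAt
  have himg : IsPreconnected (N '' Set.Ioi α) := (isPreconnected_Ioi).image N hcont
  have hsub := himg.subsingleton
  have h1 : N (ρ₀ + 1) = γ₀ := hstable _ (by linarith)
  have h2 : N ξ = N (ρ₀ + 1) :=
    hsub (Set.mem_image_of_mem N (show ξ ∈ Set.Ioi α from hξ))
      (Set.mem_image_of_mem N (show ρ₀ + 1 ∈ Set.Ioi α by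
        simp only [Set.mem_Ioi]; linarith))
  exact h2.trans h1
end

section
/- Construction of totally complex polynomials: Let g(x) = Σ_{i=0}^s a_i x^i ∈ ℝ[x] with Disc(g) ≠ 0, g totally complex (no real roots, so s is even), a_s > 0, and n > s with n − s even. Set f(t,x) = x^n + t·g(x). Then for every real β > max{α ∈ ℝ : Disc_x(f)(α) = 0}, the polynomial f(β, x) has no real roots. -/
open Polynomial

open Filter in
private lemma stmt18_aux_pos (g : Polynomial ℝ) (hcomplex : ∀ x : ℝ, g.eval x ≠ 0)
    (hlead : 0 < g.leadingCoeff) : ∀ x : ℝ, 0 < g.eval x := by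
  intro x
  rcases lt_or_gt_of_ne (hcomplex x) with hx | hx
  swap; · exact hx
  exfalso
  rcases eq_or_ne g.natDegree 0 with h0 | h0
  · obtain ⟨c, rfl⟩ := Polynomial.natDegree_eq_zero.mp h0
    simp only [eval_C] at hx
    simp [Polynomial.leadingCoeff_C] at hlead
    linarith
  · have hdegpos : 0 < g.degree := natDegree_pos_iff_degree_pos.mp (Nat.pos_of_ne_zero h0)
    have htt := g.tendsto_atTop_of_leadingCoeff_nonneg hdegpos hlead.le
    obtain ⟨y, hy1, hy2⟩ := ((htt.eventually_gt_atTop 0).and (eventually_ge_atTop x)).exists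
    have := intermediate_value_Icc hy2 (g.continuous_aeval).continuousOn
      (Set.mem_Icc.mpr ⟨hx.le, hy1.le⟩)
    obtain ⟨z, _, hz⟩ := this
    exact hcomplex z (by simpa using hz)

open Filter in
private lemma stmt18_aux_even (g : Polynomial ℝ) (hc : ∀ x : ℝ, 0 < g.eval x)
    (hlead : 0 < g.leadingCoeff) : Even g.natDegree := by
  by_contra hodd
  rw [Nat.not_even_iff_odd] at hodd
  have h0 : g.natDegree ≠ 0 := by rintro h; simp [h] at hodd
  set h : Polynomial ℝ := -(g.comp (-X)) with hh
  have hdh : h.natDegree = g.natDegree := by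
    simp [hh, natDegree_comp]
  have hlh : h.leadingCoeff = g.leadingCoeff := by
    rw [hh, leadingCoeff_neg, leadingCoeff_comp (by simp)]
    simp [hodd.neg_one_pow]
  have hdegpos : 0 < h.degree :=
    natDegree_pos_iff_degree_pos.mp (by rw [hdh]; exact Nat.pos_of_ne_zero h0)
  have htt := h.tendsto_atTop_of_leadingCoeff_nonneg hdegpos (by rw [hlh]; exact hlead.le)
  obtain ⟨y, hy⟩ := (htt.eventually_gt_atTop 0).exists
  have hev : h.eval y = -(g.eval (-y)) := by simp [hh]
  rw [hev] at hy
  linarith [hc (-y)]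

/-- Construction of totally complex polynomials: if `g` is a separable real polynomial
of even degree `s` with positive leading coefficient and no real roots, and `n > s`
with `n − s` even, then `f(β, x) = xⁿ + β·g(x)` has no real roots for every `β`
larger than the largest real root of the discriminant of `f(t,x)` with respect to
`x` (equivalently, of `P(t) = det M_n(f(t;x), f′(t;x))`, since `f(t;·)` is monic). -/
theorem stmt18 (s n : ℕ) (hsn : s < n) (hpar : Even (n - s)) (g : Polynomial ℝ)
    (hdeg : g.natDegree = s) (hsep : g.Separable)
    (hcomplex : ∀ x : ℝ, g.eval x ≠ 0) (hlead : 0 < g.coeff s)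
    (B : ℝ → Polynomial (Polynomial ℝ))
    (hB : ∀ ξ : ℝ, (C (X : Polynomial ℝ) - X) * B ξ =
      bezNum (X ^ n + C ξ * g) (X ^ n + C ξ * g).derivative)
    (α : ℝ)
    (hαroot : (bezMat n (B α)).det = 0)
    (hαmax : ∀ β : ℝ, (bezMat n (B β)).det = 0 → β ≤ α) :
    ∀ β : ℝ, α < β → ∀ x : ℝ, (X ^ n + C β * g : Polynomial ℝ).eval x ≠ 0 := by
  -- the leading coefficient of `g` is `g.coeff s` and it is positive
  have hleadC : 0 < g.leadingCoeff := by rwa [leadingCoeff, hdeg]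
  have hgpos : ∀ x : ℝ, 0 < g.eval x := stmt18_aux_pos g hcomplex hleadC
  have hseven : Even s := by
    have := stmt18_aux_even g hgpos hleadC
    rwa [hdeg] at this
  have hneven : Even n := by
    rw [Nat.even_iff] at hpar hseven ⊢
    omega
  have hn2 : 2 ≤ n := by
    rw [Nat.even_iff] at hpar
    omega
  -- `det (bezMat n (B 0)) = 0`, hence `0 ≤ α`
  have hdet0 : (bezMat n (B 0)).det = 0 := by
    have hB0 := hB 0
    obtain ⟨m, rfl⟩ : ∃ m, n = m + 1 := ⟨n - 1, by omega⟩
    have key : bezNum (X ^ (m+1) : Polynomial ℝ) (derivative (X ^ (m+1))) =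
        (C (X : Polynomial ℝ) - X) * (C (C ((m:ℝ)+1) * X ^ m) * X ^ m) := by
      have hder : derivative (X ^ (m+1) : Polynomial ℝ) = C ((m:ℝ)+1) * X ^ m := by
        simp [derivative_X_pow]
      rw [bezNum, hder]
      simp only [Polynomial.map_mul, Polynomial.map_pow, map_C, map_X, map_pow, map_mul,
        pow_succ]
      ring
    have hB0' : (C (X : Polynomial ℝ) - X) * B 0 =
        (C (X : Polynomial ℝ) - X) * (C (C ((m:ℝ)+1) * X ^ m) * X ^ m) := by
      rw [hB0]; simp only [map_zero, zero_mul, add_zero]; exact key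
    have hcx : (C (X : Polynomial ℝ) - X) ≠ 0 := by
      intro h
      have := congrArg (fun p => (p.coeff 1 : Polynomial ℝ)) h
      simp [coeff_C] at this
    have hBeq : B 0 = C (C ((m:ℝ)+1) * X ^ m) * X ^ m := mul_left_cancel₀ hcx hB0'
    apply Matrix.det_eq_zero_of_row_eq_zero ⟨1, by omega⟩
    intro j
    simp only [bezMat, hBeq, coeff_C_mul, coeff_X_pow]
    have h1 : m + 1 - 1 - 1 = m - 1 := by omega
    rw [h1]
    split_ifs with h
    · simp only [mul_one, coeff_C_mul, coeff_X_pow]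
      rw [if_neg (by omega)]
      ring
    · simp
  have hα0 : (0:ℝ) ≤ α := hαmax 0 hdet0
  intro β hβ x
  have hβpos : 0 < β := lt_of_le_of_lt hα0 hβ
  have hxn : 0 ≤ x ^ n := hneven.pow_nonneg x
  have : (X ^ n + C β * g : Polynomial ℝ).eval x = x ^ n + β * g.eval x := by simp
  rw [this]
  have := mul_pos hβpos (hgpos x)
  positivity
end

section
/- For f(t;x) = x^n + t·g(x) with g(x) = Σ_{k=0}^s t_{s−k}x^{s−k} and n > s ≥ 1 over the field ℝ(t₀,…,t_s,t), the Bezoutian matrix A(t) = M_n(f, ∂f/∂x) decomposes as A(t) = Â(t) + Ã(t), where Ã(t) = t²·M_n(g, g′) has nonzero entries only in the bottom-right s×s block given by (Ã)_{ij} = t²·(M_s(g,g′))_{i−(n−s), j−(n−s)} for n−s+1 ≤ i,j ≤ n, and Â(t) has entries: Â_{11} = n; Â_{1,l_k−1} = Â_{l_k−1,1} = (s−k)t_{s−k}t for 0 ≤ k ≤ s−1; Â_{ij} = −(l_k−2)t_{s−k}t when i+j = l_k and 2 ≤ i,j ≤ l_k−2 (0 ≤ k ≤ s), where l_k = n−s+k+2;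 and Â_{ij} = 0 otherwise. -/
open Polynomial

section Aux

variable {F : Type*} [CommRing F]

variable {F : Type*} [CommRing F]


/-- recurrence: from (C X - X) * B = N get B.coeff e = X * B.coeff (e+1) - N.coeff (e+1) -/
lemma rec1 (B N : Polynomial (Polynomial F)) (h : (C (X:Polynomial F) - X) * B = N) (e : ℕ) :
    B.coeff e = X * B.coeff (e+1) - N.coeff (e+1) := by
  have := congrArg (fun p => Polynomial.coeff p (e+1)) h
  simp only [sub_mul, coeff_sub, coeff_C_mul, coeff_X_mul] at this
  linear_combination -this

lemma keyrec (B N : Polynomial (Polynomial F)) (h : (C (X:Polynomial F) - X) * B = N)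
    (d : ℕ) (hN : ∀ m, d < m → N.coeff m = 0) : ∀ e, d ≤ e → B.coeff e = 0 := by
  have main : ∀ m e, B.natDegree ≤ e + m → d ≤ e → B.coeff e = 0 := by
    intro m
    induction m with
    | zero =>
      intro e he hd
      rw [rec1 B N h e, hN (e+1) (by omega), coeff_eq_zero_of_natDegree_lt (by omega)]
      ring
    | succ m ih =>
      intro e he hd
      rw [rec1 B N h e, hN (e+1) (by omega), ih (e+1) (by omega) (by omega)]
      ring
  intro e hd
  exact main B.natDegree e (by omega) hd


noncomputable def pswap : Polynomial (Polynomial F) →+* Polynomial (Polynomial F) :=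
  eval₂RingHom (mapRingHom C) (C X)

lemma pswap_C (p : Polynomial F) : pswap (C p) = p.map C := by
  simp [pswap]

lemma pswap_map (p : Polynomial F) : pswap (p.map C) = C p := by
  show eval₂ (mapRingHom C) (C X) (p.map C) = C p
  rw [eval₂_map]
  have : ((mapRingHom (C : F →+* Polynomial F)).comp C) = (C.comp C : F →+* _) := by
    ext a; simp
  rw [this]
  induction p using Polynomial.induction_on' with
  | add p q hp hq => simp [eval₂_add, hp, hq]
  | monomial i a =>
    simp [eval₂_monomial, RingHom.comp_apply]
    rw [← Polynomial.C_pow, ← C_mul, C_mul_X_pow_eq_monomial]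

lemma pswap_coeff (p : Polynomial (Polynomial F)) (i j : ℕ) :
    ((pswap p).coeff j).coeff i = (p.coeff i).coeff j := by
  induction p using Polynomial.induction_on' with
  | add p q hp hq => simp [hp, hq]
  | monomial m q =>
    rw [pswap, coe_eval₂RingHom, ← C_mul_X_pow_eq_monomial, eval₂_mul, eval₂_C, eval₂_X_pow]
    rw [← Polynomial.C_pow]
    simp only [coeff_mul_C, coeff_C, Polynomial.coeff_map]
    by_cases him : i = m
    · subst him
      simp [coeff_X_pow, coeff_C]
    · simp [coeff_map, coeff_C_mul, coeff_X_pow, him]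


lemma CXsubX_ne [Nontrivial F] : (C (X : Polynomial F) - X) ≠ 0 := by
  intro h
  have := congrArg (fun p => Polynomial.coeff p 1) h
  simp [coeff_C] at this

lemma pswap_bezNum (f₁ f₂ : Polynomial F) : pswap (bezNum f₁ f₂) = - bezNum f₁ f₂ := by
  simp only [bezNum, map_sub, map_mul, pswap_C, pswap_map]
  ring

lemma bezNum_coeff (f₁ f₂ : Polynomial F) (m : ℕ) :
    (bezNum f₁ f₂).coeff m = f₁ * C (f₂.coeff m) - C (f₁.coeff m) * f₂ := by
  simp [bezNum, coeff_map]

lemma bez_symm {F : Type*} [Field F] (N B : Polynomial (Polynomial F))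
    (h : (C (X : Polynomial F) - X) * B = N) (hN : pswap N = -N) : pswap B = B := by
  have h2 := congrArg pswap h
  rw [map_mul, hN] at h2
  have h3 : pswap (C (X : Polynomial F) - X) = -(C (X : Polynomial F) - X) := by
    simp only [map_sub, pswap_C]
    show Polynomial.map C X - pswap X = _
    rw [pswap, coe_eval₂RingHom, eval₂_X]
    simp
  rw [h3] at h2
  have h4 : (C (X : Polynomial F) - X) * (pswap B - B) = 0 := by
    rw [mul_sub, h]
    linear_combination -h2
  have h5 := (mul_eq_zero.mp h4).resolve_left CXsubX_ne
  exact sub_eq_zero.mp h5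

lemma gcoeff (s : ℕ) (c : ℕ → F) (g : Polynomial F)
    (hg : g = ∑ k ∈ Finset.range (s + 1), C (c k) * X ^ k) (m : ℕ) (hm : s < m) :
    g.coeff m = 0 := by
  rw [hg, finset_sum_coeff]
  apply Finset.sum_eq_zero
  intro k hk
  simp only [Finset.mem_range] at hk
  rw [coeff_C_mul, coeff_X_pow, if_neg (by omega), mul_zero]

lemma Bg_coeff_y {F : Type*} [Field F] (s : ℕ) (c : ℕ → F) (g : Polynomial F)
    (hg : g = ∑ k ∈ Finset.range (s + 1), C (c k) * X ^ k) (Bg : Polynomial (Polynomial F))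
    (hBg : (C (X : Polynomial F) - X) * Bg = bezNum g g.derivative) :
    ∀ e, s ≤ e → Bg.coeff e = 0 := by
  apply keyrec _ _ hBg
  intro m hm
  rw [bezNum_coeff, coeff_derivative, gcoeff s c g hg (m+1) (by omega),
    gcoeff s c g hg m (by omega)]
  simp

lemma Bg_coeff_x {F : Type*} [Field F] (s : ℕ) (c : ℕ → F) (g : Polynomial F)
    (hg : g = ∑ k ∈ Finset.range (s + 1), C (c k) * X ^ k) (Bg : Polynomial (Polynomial F))
    (hBg : (C (X : Polynomial F) - X) * Bg = bezNum g g.derivative) :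
    ∀ i j, s ≤ i → (Bg.coeff j).coeff i = 0 := by
  intro i j hi
  have hsym := bez_symm _ _ hBg (pswap_bezNum g g.derivative)
  rw [← hsym, pswap_coeff, Bg_coeff_y s c g hg Bg hBg i hi, coeff_zero]

noncomputable def TT (d b : ℕ) : Polynomial (Polynomial F) :=
  ∑ m ∈ Finset.range d, C (X ^ (b + m)) * X ^ (b + (d - 1 - m))

lemma TT_mul (d b : ℕ) :
    (C (X : Polynomial F) - X) * TT d b = C (X ^ (b + d)) * X ^ b - C (X ^ b) * X ^ (b + d) := by
  rw [TT, Finset.mul_sum]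
  have h : ∀ m ∈ Finset.range d,
      (C (X : Polynomial F) - X) * (C (X ^ (b + m)) * X ^ (b + (d - 1 - m)))
        = (fun m => C (X : Polynomial F) ^ (b + m) * X ^ (b + (d - m))) (m + 1)
          - (fun m => C (X : Polynomial F) ^ (b + m) * X ^ (b + (d - m))) m := by
    intro m hm
    simp only [Finset.mem_range] at hm
    simp only [C_pow]
    rw [show b + (d - (m+1)) = b + (d - 1 - m) by omega,
        show b + (d - m) = b + (d - 1 - m) + 1 by omega]
    ring
  rw [Finset.sum_congr rfl h,
    Finset.sum_range_sub (fun m => C (X : Polynomial F) ^ (b + m) * X ^ (b + (d - m)))]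
  simp [C_pow]

lemma TT_coeff (d b i j : ℕ) :
    (((TT d b : Polynomial (Polynomial F))).coeff j).coeff i =
      if b ≤ i ∧ i < b + d ∧ i + j = 2 * b + d - 1 then 1 else 0 := by
  rw [TT, finset_sum_coeff, finset_sum_coeff]
  have h : ∀ m ∈ Finset.range d,
      (((C (X ^ (b + m)) * X ^ (b + (d - 1 - m)) : Polynomial (Polynomial F))).coeff j).coeff i
        = if i = b + m ∧ j = b + (d - 1 - m) then (1 : F) else 0 := by
    intro m hm
    rw [coeff_C_mul, coeff_X_pow]
    by_cases hj : j = b + (d - 1 - m)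
    · simp only [hj, if_pos rfl, mul_one, coeff_X_pow]
      by_cases hi : i = b + m <;> simp [hi]
    · simp [hj]
  rw [Finset.sum_congr rfl h]
  by_cases hc : b ≤ i ∧ i < b + d ∧ i + j = 2 * b + d - 1
  · rw [if_pos hc, Finset.sum_eq_single (i - b)]
    · rw [if_pos ⟨by omega, by omega⟩]
    · intro m hm hne
      simp only [Finset.mem_range] at hm
      rw [if_neg]
      rintro ⟨h1, h2⟩; omega
    · intro hnot
      simp only [Finset.mem_range] at hnot
      rw [if_neg]
      rintro ⟨h1, h2⟩; omega
  · rw [if_neg hc, Finset.sum_eq_zero]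
    intro m hm
    simp only [Finset.mem_range] at hm
    rw [if_neg]
    rintro ⟨h1, h2⟩
    exact hc ⟨by omega, by omega, by omega⟩

lemma bezNum_Xpow (a b : ℕ) :
    (bezNum (X ^ a) (X ^ b) : Polynomial (Polynomial F)) = C (X ^ a) * X ^ b - C (X ^ b) * X ^ a := by
  simp [bezNum, Polynomial.map_pow]
  ring

lemma bezNum_Cmul_right (p q : Polynomial F) (a : F) :
    bezNum p (C a * q) = C (C a) * bezNum p q := by
  simp only [bezNum, Polynomial.map_mul, map_C, map_mul]
  ring

lemma bezNum_sum_right {ι : Type*} (p : Polynomial F) (u : Finset ι) (f : ι → Polynomial F) :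
    bezNum p (∑ i ∈ u, f i) = ∑ i ∈ u, bezNum p (f i) := by
  simp only [bezNum, Polynomial.map_sum, map_sum, Finset.mul_sum, Finset.sum_mul,
    ← Finset.sum_sub_distrib]

lemma bezNum_sum_left {ι : Type*} (q : Polynomial F) (u : Finset ι) (f : ι → Polynomial F) :
    bezNum (∑ i ∈ u, f i) q = ∑ i ∈ u, bezNum (f i) q := by
  simp only [bezNum, Polynomial.map_sum, map_sum, Finset.mul_sum, Finset.sum_mul,
    ← Finset.sum_sub_distrib]

lemma bezNum_Cmul_left (p q : Polynomial F) (a : F) :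
    bezNum (C a * p) q = C (C a) * bezNum p q := by
  simp only [bezNum, Polynomial.map_mul, Polynomial.map_C, map_mul, map_C]
  ring

lemma hgd_lemma (s : ℕ) (c : ℕ → F) (g : Polynomial F)
    (hg : g = ∑ k ∈ Finset.range (s + 1), C (c k) * X ^ k) :
    g.derivative = ∑ k ∈ Finset.range (s + 1), C (c k) * (C ((k : ℕ) : F) * X ^ (k - 1)) := by
  rw [hg, derivative_sum]
  exact Finset.sum_congr rfl fun k _ => by rw [derivative_C_mul, derivative_X_pow]

lemma Bf_eq {F : Type*} [Field F] (s n : ℕ) (hs : 1 ≤ s) (hsn : s < n) (t : F) (c : ℕ → F)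
    (g : Polynomial F) (hg : g = ∑ k ∈ Finset.range (s + 1), C (c k) * X ^ k)
    (Bf Bg : Polynomial (Polynomial F))
    (hBf : (C (X : Polynomial F) - X) * Bf =
      bezNum (X ^ n + C t * g) (X ^ n + C t * g).derivative)
    (hBg : (C (X : Polynomial F) - X) * Bg = bezNum g g.derivative) :
    Bf = C (C ((n : ℕ) : F)) * TT 1 (n - 1)
      + C (C t) * ∑ k ∈ Finset.range (s + 1), C (C (c k)) *
          (C (C ((k : ℕ) : F)) * TT (n + 1 - k) (k - 1) - C (C ((n : ℕ) : F)) * TT (n - 1 - k) k)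
      + (C (C t)) ^ 2 * Bg := by
  apply mul_left_cancel₀ (CXsubX_ne (F := F))
  rw [hBf]
  have hd : (X ^ n + C t * g).derivative = C ((n : ℕ) : F) * X ^ (n - 1) + C t * g.derivative := by
    simp [derivative_X_pow]
  have hb : bezNum (X ^ n + C t * g) (C ((n : ℕ) : F) * X ^ (n - 1) + C t * g.derivative)
      = C (C ((n : ℕ) : F)) * bezNum (X ^ n) (X ^ (n - 1))
        + C (C t) * bezNum (X ^ n) g.derivative
        + C (C t) * (C (C ((n : ℕ) : F)) * bezNum g (X ^ (n - 1)))
        + C (C t) * C (C t) * bezNum g g.derivative := by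
    simp only [bezNum, Polynomial.map_add, Polynomial.map_mul, Polynomial.map_pow,
      Polynomial.map_X, Polynomial.map_C, map_add, map_mul, map_pow]
    ring
  have hX1 : (C (X : Polynomial F) - X) * TT 1 (n - 1)
      = bezNum (X ^ n : Polynomial F) (X ^ (n - 1)) := by
    rw [TT_mul, bezNum_Xpow, show (n - 1) + 1 = n by omega]
  have hs1 : bezNum (X ^ n : Polynomial F) g.derivative
      = ∑ k ∈ Finset.range (s + 1), C (C (c k)) *
          (C (C ((k : ℕ) : F)) * bezNum (X ^ n : Polynomial F) (X ^ (k - 1))) := by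
    rw [hgd_lemma s c g hg, bezNum_sum_right]
    exact Finset.sum_congr rfl fun k _ => by rw [bezNum_Cmul_right, bezNum_Cmul_right]
  have hs2 : bezNum g (X ^ (n - 1) : Polynomial F)
      = ∑ k ∈ Finset.range (s + 1), C (C (c k)) * bezNum (X ^ k : Polynomial F) (X ^ (n - 1)) := by
    conv_lhs => rw [hg]
    rw [bezNum_sum_left]
    exact Finset.sum_congr rfl fun k _ => by rw [bezNum_Cmul_left]
  have hSig : (C (X : Polynomial F) - X) * ∑ k ∈ Finset.range (s + 1), C (C (c k)) *
          (C (C ((k : ℕ) : F)) * TT (n + 1 - k) (k - 1) - C (C ((n : ℕ) : F)) * TT (n - 1 - k) k)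
      = bezNum (X ^ n : Polynomial F) g.derivative
        + C (C ((n : ℕ) : F)) * bezNum g (X ^ (n - 1)) := by
    rw [Finset.mul_sum, hs1, hs2, Finset.mul_sum, ← Finset.sum_add_distrib]
    apply Finset.sum_congr rfl
    intro k hk
    simp only [Finset.mem_range] at hk
    have e2 : (C (X : Polynomial F) - X) * TT (n - 1 - k) k
        = C (X ^ (n - 1)) * X ^ k - C (X ^ k) * X ^ (n - 1) := by
      rw [TT_mul, show k + (n - 1 - k) = n - 1 by omega]
    rcases Nat.eq_zero_or_pos k with hk0 | hk0
    · subst hk0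
      simp only [Nat.cast_zero, map_zero, zero_mul, mul_zero, zero_sub, zero_add]
      rw [bezNum_Xpow]
      linear_combination (-(C (C (c 0))) * C (C ((n : ℕ) : F))) * e2
    · have e1 : (C (X : Polynomial F) - X) * TT (n + 1 - k) (k - 1)
          = C (X ^ n) * X ^ (k - 1) - C (X ^ (k - 1)) * X ^ n := by
        rw [TT_mul, show (k - 1) + (n + 1 - k) = n by omega]
      rw [bezNum_Xpow, bezNum_Xpow]
      linear_combination (C (C (c k)) * C (C ((k : ℕ) : F))) * e1
        - (C (C (c k)) * C (C ((n : ℕ) : F))) * e2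
  rw [hd, hb]
  linear_combination -(C (C ((n : ℕ) : F)) * hX1) - C (C t) * hSig - C (C t) * C (C t) * hBg

end Aux

/-- Decomposition `A(t) = Â(t) + Ã(t)` of the Bezoutian matrix of
`f(t;x) = xⁿ + t·g(x)`, `g(x) = ∑_{k=0}^s t_{s-k} x^{s-k}`: writing `I = i+1`,
`J = j+1` for the `1`-based indices and `l_k = n-s+k+2`, the matrix `Â(t)` has
`(1,1)` entry `n`, entries `(s-k)t_{s-k}t` at `(1, l_k - 1)` and `(l_k - 1, 1)` for
`0 ≤ k ≤ s-1` (i.e. value `(n+1-J)·t_{n+1-J}·t`), entries `-(l_k-2)t_{s-k}t` on the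
band `I+J = l_k`, `2 ≤ I, J ≤ l_k - 2`, `0 ≤ k ≤ s` (i.e. value
`-(I+J-2)·t_{n+2-I-J}·t`), and `0` elsewhere; and `Ã(t) = t²·M_n(g, g′)` is
supported on the lower-right `s×s` block, where it is `t²·M_s(g, g′)`. -/
theorem stmt19 {F : Type*} [Field F] [CharZero F] (s n : ℕ) (hs : 1 ≤ s)
    (hsn : s < n) (t : F) (c : ℕ → F)
    (g : Polynomial F) (hg : g = ∑ k ∈ Finset.range (s + 1), C (c k) * X ^ k)
    (Bf Bg : Polynomial (Polynomial F))
    (hBf : (C (X : Polynomial F) - X) * Bf =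
      bezNum (X ^ n + C t * g) (X ^ n + C t * g).derivative)
    (hBg : (C (X : Polynomial F) - X) * Bg = bezNum g g.derivative) :
    ∀ i j : Fin n,
      bezMat n Bf i j =
        (if (i : ℕ) + 1 = 1 ∧ (j : ℕ) + 1 = 1 then (n : F)
          else if (i : ℕ) + 1 = 1 ∧ n - s + 1 ≤ (j : ℕ) + 1 then
            ((n + 1 - ((j : ℕ) + 1) : ℕ) : F) * c (n + 1 - ((j : ℕ) + 1)) * t
          else if (j : ℕ) + 1 = 1 ∧ n - s + 1 ≤ (i : ℕ) + 1 then
            ((n + 1 - ((i : ℕ) + 1) : ℕ) : F) * c (n + 1 - ((i : ℕ) + 1)) * t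
          else if 2 ≤ (i : ℕ) + 1 ∧ 2 ≤ (j : ℕ) + 1 ∧
              n - s + 2 ≤ (i : ℕ) + 1 + ((j : ℕ) + 1) ∧
              (i : ℕ) + 1 + ((j : ℕ) + 1) ≤ n + 2 then
            -((((i : ℕ) + 1 + ((j : ℕ) + 1) - 2 : ℕ) : F)) *
              c (n + 2 - ((i : ℕ) + 1 + ((j : ℕ) + 1))) * t
          else 0) +
        (if h : n - s ≤ (i : ℕ) ∧ n - s ≤ (j : ℕ) then
            t ^ 2 * bezMat s Bg ⟨(i : ℕ) - (n - s), by omega⟩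
              ⟨(j : ℕ) - (n - s), by omega⟩
          else 0) := by
  intro i j
  have hi : (i:ℕ) < n := i.isLt
  have hj : (j:ℕ) < n := j.isLt
  have hBfeq := Bf_eq s n hs hsn t c g hg Bf Bg hBf hBg
  show ((Bf.coeff (n - 1 - (j:ℕ))).coeff (n - 1 - (i:ℕ))) = _
  rw [hBfeq, pow_two, mul_assoc]
  simp only [coeff_add, coeff_C_mul, coeff_sub, finset_sum_coeff, TT_coeff]
  congr 1
  · by_cases h1 : (i:ℕ) = 0 ∧ (j:ℕ) = 0
    · rw [if_pos (show (i:ℕ) + 1 = 1 ∧ (j:ℕ) + 1 = 1 by omega),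
          if_pos (show n - 1 ≤ n - 1 - (i:ℕ) ∧ n - 1 - (i:ℕ) < n - 1 + 1 ∧ n - 1 - (i:ℕ) + (n - 1 - (j:ℕ)) = 2 * (n - 1) + 1 - 1 by omega),
          Finset.sum_eq_zero]
      · ring
      · intro m hm
        simp only [Finset.mem_range] at hm
        by_cases hm0 : m = 0
        · subst hm0
          simp only [Nat.cast_zero, zero_mul, zero_sub]
          rw [if_neg (by omega)]
          ring
        · rw [if_neg (by omega), if_neg (by omega)]
          ring
    · by_cases h2 : (i:ℕ) + 1 = 1 ∧ n - s + 1 ≤ (j:ℕ) + 1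
      · rw [if_neg (show ¬(n - 1 ≤ n - 1 - (i:ℕ) ∧ n - 1 - (i:ℕ) < n - 1 + 1 ∧ n - 1 - (i:ℕ) + (n - 1 - (j:ℕ)) = 2 * (n - 1) + 1 - 1) by omega),
            Finset.sum_eq_single (n - (j:ℕ)),
            if_pos (show n - (j:ℕ) - 1 ≤ n - 1 - (i:ℕ) ∧ n - 1 - (i:ℕ) < n - (j:ℕ) - 1 + (n + 1 - (n - (j:ℕ))) ∧ n - 1 - (i:ℕ) + (n - 1 - (j:ℕ)) = 2 * (n - (j:ℕ) - 1) + (n + 1 - (n - (j:ℕ))) - 1 by omega),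
            if_neg (show ¬(n - (j:ℕ) ≤ n - 1 - (i:ℕ) ∧ n - 1 - (i:ℕ) < n - (j:ℕ) + (n - 1 - (n - (j:ℕ))) ∧ n - 1 - (i:ℕ) + (n - 1 - (j:ℕ)) = 2 * (n - (j:ℕ)) + (n - 1 - (n - (j:ℕ))) - 1) by omega),
            if_neg (show ¬((i:ℕ) + 1 = 1 ∧ (j:ℕ) + 1 = 1) by omega),
            if_pos (show (i:ℕ) + 1 = 1 ∧ n - s + 1 ≤ (j:ℕ) + 1 from h2),
            show n + 1 - ((j:ℕ) + 1) = n - (j:ℕ) by omega]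
        · ring
        · intro m hm hne
          simp only [Finset.mem_range] at hm
          by_cases hm0 : m = 0
          · subst hm0
            simp only [Nat.cast_zero, zero_mul, zero_sub]
            rw [if_neg (by omega)]
            ring
          · rw [if_neg (by omega), if_neg (by omega)]
            ring
        · intro hno
          exact absurd (Finset.mem_range.mpr (by omega)) hno
      · by_cases h3 : (j:ℕ) + 1 = 1 ∧ n - s + 1 ≤ (i:ℕ) + 1
        · rw [if_neg (show ¬(n - 1 ≤ n - 1 - (i:ℕ) ∧ n - 1 - (i:ℕ) < n - 1 + 1 ∧ n - 1 - (i:ℕ) + (n - 1 - (j:ℕ)) = 2 * (n - 1) + 1 - 1) by omega),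
              Finset.sum_eq_single (n - (i:ℕ)),
              if_pos (show n - (i:ℕ) - 1 ≤ n - 1 - (i:ℕ) ∧ n - 1 - (i:ℕ) < n - (i:ℕ) - 1 + (n + 1 - (n - (i:ℕ))) ∧ n - 1 - (i:ℕ) + (n - 1 - (j:ℕ)) = 2 * (n - (i:ℕ) - 1) + (n + 1 - (n - (i:ℕ))) - 1 by omega),
              if_neg (show ¬(n - (i:ℕ) ≤ n - 1 - (i:ℕ) ∧ n - 1 - (i:ℕ) < n - (i:ℕ) + (n - 1 - (n - (i:ℕ))) ∧ n - 1 - (i:ℕ) + (n - 1 - (j:ℕ)) = 2 * (n - (i:ℕ)) + (n - 1 - (n - (i:ℕ))) - 1) by omega),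
              if_neg (show ¬((i:ℕ) + 1 = 1 ∧ (j:ℕ) + 1 = 1) by omega),
              if_neg (show ¬((i:ℕ) + 1 = 1 ∧ n - s + 1 ≤ (j:ℕ) + 1) from h2),
              if_pos (show (j:ℕ) + 1 = 1 ∧ n - s + 1 ≤ (i:ℕ) + 1 from h3),
              show n + 1 - ((i:ℕ) + 1) = n - (i:ℕ) by omega]
          · ring
          · intro m hm hne
            simp only [Finset.mem_range] at hm
            by_cases hm0 : m = 0
            · subst hm0
              simp only [Nat.cast_zero, zero_mul, zero_sub]
              rw [if_neg (by omega)]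
              ring
            · rw [if_neg (by omega), if_neg (by omega)]
              ring
          · intro hno
            exact absurd (Finset.mem_range.mpr (by omega)) hno
        · by_cases h4 : 2 ≤ (i:ℕ) + 1 ∧ 2 ≤ (j:ℕ) + 1 ∧ n - s + 2 ≤ (i:ℕ) + 1 + ((j:ℕ) + 1) ∧ (i:ℕ) + 1 + ((j:ℕ) + 1) ≤ n + 2
          · by_cases hk0 : (i:ℕ) + (j:ℕ) = n
            · rw [if_neg (show ¬(n - 1 ≤ n - 1 - (i:ℕ) ∧ n - 1 - (i:ℕ) < n - 1 + 1 ∧ n - 1 - (i:ℕ) + (n - 1 - (j:ℕ)) = 2 * (n - 1) + 1 - 1) by omega),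
                  Finset.sum_eq_single (0 : ℕ)]
              · simp only [Nat.cast_zero, zero_mul, zero_sub]
                rw [if_pos (show 0 ≤ n - 1 - (i:ℕ) ∧ n - 1 - (i:ℕ) < 0 + (n - 1 - (0)) ∧ n - 1 - (i:ℕ) + (n - 1 - (j:ℕ)) = 2 * (0) + (n - 1 - (0)) - 1 by omega),
                    if_neg (show ¬((i:ℕ) + 1 = 1 ∧ (j:ℕ) + 1 = 1) by omega),
                    if_neg (show ¬((i:ℕ) + 1 = 1 ∧ n - s + 1 ≤ (j:ℕ) + 1) from h2),
                    if_neg (show ¬((j:ℕ) + 1 = 1 ∧ n - s + 1 ≤ (i:ℕ) + 1) from h3),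
                    if_pos (show 2 ≤ (i:ℕ) + 1 ∧ 2 ≤ (j:ℕ) + 1 ∧ n - s + 2 ≤ (i:ℕ) + 1 + ((j:ℕ) + 1) ∧ (i:ℕ) + 1 + ((j:ℕ) + 1) ≤ n + 2 from h4),
                    show (i:ℕ) + 1 + ((j:ℕ) + 1) - 2 = n by omega,
                    show n + 2 - ((i:ℕ) + 1 + ((j:ℕ) + 1)) = 0 by omega]
                ring
              · intro m hm hne
                simp only [Finset.mem_range] at hm
                rw [if_neg (by omega), if_neg (by omega)]
                ring
              · intro hno
                exact absurd (Finset.mem_range.mpr (by omega)) hno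
            · rw [if_neg (show ¬(n - 1 ≤ n - 1 - (i:ℕ) ∧ n - 1 - (i:ℕ) < n - 1 + 1 ∧ n - 1 - (i:ℕ) + (n - 1 - (j:ℕ)) = 2 * (n - 1) + 1 - 1) by omega),
                  Finset.sum_eq_single (n - ((i:ℕ) + (j:ℕ))),
                  if_pos (show n - ((i:ℕ) + (j:ℕ)) - 1 ≤ n - 1 - (i:ℕ) ∧ n - 1 - (i:ℕ) < n - ((i:ℕ) + (j:ℕ)) - 1 + (n + 1 - (n - ((i:ℕ) + (j:ℕ)))) ∧ n - 1 - (i:ℕ) + (n - 1 - (j:ℕ)) = 2 * (n - ((i:ℕ) + (j:ℕ)) - 1) + (n + 1 - (n - ((i:ℕ) + (j:ℕ)))) - 1 by omega),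
                  if_pos (show n - ((i:ℕ) + (j:ℕ)) ≤ n - 1 - (i:ℕ) ∧ n - 1 - (i:ℕ) < n - ((i:ℕ) + (j:ℕ)) + (n - 1 - (n - ((i:ℕ) + (j:ℕ)))) ∧ n - 1 - (i:ℕ) + (n - 1 - (j:ℕ)) = 2 * (n - ((i:ℕ) + (j:ℕ))) + (n - 1 - (n - ((i:ℕ) + (j:ℕ)))) - 1 by omega),
                  if_neg (show ¬((i:ℕ) + 1 = 1 ∧ (j:ℕ) + 1 = 1) by omega),
                  if_neg (show ¬((i:ℕ) + 1 = 1 ∧ n - s + 1 ≤ (j:ℕ) + 1) from h2),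
                  if_neg (show ¬((j:ℕ) + 1 = 1 ∧ n - s + 1 ≤ (i:ℕ) + 1) from h3),
                  if_pos (show 2 ≤ (i:ℕ) + 1 ∧ 2 ≤ (j:ℕ) + 1 ∧ n - s + 2 ≤ (i:ℕ) + 1 + ((j:ℕ) + 1) ∧ (i:ℕ) + 1 + ((j:ℕ) + 1) ≤ n + 2 from h4),
                  show (i:ℕ) + 1 + ((j:ℕ) + 1) - 2 = (i:ℕ) + (j:ℕ) by omega,
                  show n + 2 - ((i:ℕ) + 1 + ((j:ℕ) + 1)) = n - ((i:ℕ) + (j:ℕ)) by omega,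
                  Nat.cast_sub (show (i:ℕ) + (j:ℕ) ≤ n by omega)]
              · push_cast
                ring
              · intro m hm hne
                simp only [Finset.mem_range] at hm
                by_cases hm0 : m = 0
                · subst hm0
                  simp only [Nat.cast_zero, zero_mul, zero_sub]
                  rw [if_neg (by omega)]
                  ring
                · rw [if_neg (by omega), if_neg (by omega)]
                  ring
              · intro hno
                exact absurd (Finset.mem_range.mpr (by omega)) hno
          · rw [if_neg (show ¬(n - 1 ≤ n - 1 - (i:ℕ) ∧ n - 1 - (i:ℕ) < n - 1 + 1 ∧ n - 1 - (i:ℕ) + (n - 1 - (j:ℕ)) = 2 * (n - 1) + 1 - 1) by omega),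
                if_neg (show ¬((i:ℕ) + 1 = 1 ∧ (j:ℕ) + 1 = 1) by omega),
                if_neg (show ¬((i:ℕ) + 1 = 1 ∧ n - s + 1 ≤ (j:ℕ) + 1) from h2),
                if_neg (show ¬((j:ℕ) + 1 = 1 ∧ n - s + 1 ≤ (i:ℕ) + 1) from h3),
                if_neg (show ¬(2 ≤ (i:ℕ) + 1 ∧ 2 ≤ (j:ℕ) + 1 ∧ n - s + 2 ≤ (i:ℕ) + 1 + ((j:ℕ) + 1) ∧ (i:ℕ) + 1 + ((j:ℕ) + 1) ≤ n + 2) from h4),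
                Finset.sum_eq_zero]
            · ring
            · intro m hm
              simp only [Finset.mem_range] at hm
              by_cases hm0 : m = 0
              · subst hm0
                simp only [Nat.cast_zero, zero_mul, zero_sub]
                rw [if_neg (by omega)]
                ring
              · rw [if_neg (by omega), if_neg (by omega)]
                ring
  · by_cases hbl : n - s ≤ (i:ℕ) ∧ n - s ≤ (j:ℕ)
    · rw [dif_pos hbl]
      show _ = t ^ 2 * (Bg.coeff (s - 1 - ((j:ℕ) - (n - s)))).coeff (s - 1 - ((i:ℕ) - (n - s)))
      rw [show s - 1 - ((j:ℕ) - (n - s)) = n - 1 - (j:ℕ) by omega,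
          show s - 1 - ((i:ℕ) - (n - s)) = n - 1 - (i:ℕ) by omega]
      ring
    · rw [dif_neg hbl]
      rcases not_and_or.mp hbl with h | h
      · rw [Bg_coeff_x s c g hg Bg hBg _ _ (by omega)]
        ring
      · rw [Bg_coeff_y s c g hg Bg hBg _ (by omega), coeff_zero]
        ring
end
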